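/- Let D be an integral domain and let P ⊆ Q be prime ideals of D. If the extension P D_Q is a t_{D_Q}-ideal of D_Q (i.e. (P D_Q)^{t_{D_Q}} = P D_Q), then P is a t_D-ideal of D (i.e. P^{t_D} = P). -/

import Mathlib

open Pointwise

section Preamble

variable (D : Type*) [CommRing D] [IsDomain D]
variable (K : Type*) [Field K] [Algebra D K] [IsFractionRing D K]

/-- The localization `D_P` of `D` at a prime `P`, as a subalgebra of the quotient field. -/
noncomputable def locAt (P : Ideal D) (hP : P.IsPrime) : Subalgebra D K :=
  Localization.subalgebra K P.primeCompl
    (fun x hx => mem_nonZeroDivisors_of_ne_zero (fun h0 : x = 0 => hx (h0 ▸ P.zero_mem)))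

/-- `D_P` as a `D`-submodule of the quotient field. -/
noncomputable def locAtM (P : Ideal D) (hP : P.IsPrime) : Submodule D K :=
  Subalgebra.toSubmodule (locAt D K P hP)

variable {D K}

/-- `E` is finitely generated as a module over the subring corresponding to `Rm`. -/
def IsRFG (Rm E : Submodule D K) : Prop :=
  ∃ F₀ : Submodule D K, F₀.FG ∧ F₀ ≠ ⊥ ∧ E = F₀ * Rm

/-- `s` is a semistar operation on the subring corresponding to `Rm`
(on `D` itself when `Rm = 1`): it is defined on the nonzero `Rm`-submodules of `K`. -/
def IsSemistar (Rm : Submodule D K) (s : Submodule D K → Submodule D K) : Prop :=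
  (∀ E, E ≠ ⊥ → Rm * E ≤ E → Rm * s E ≤ s E) ∧
  (∀ (x : K) (E), x ≠ 0 → E ≠ ⊥ → Rm * E ≤ E → s (x • E) = x • s E) ∧
  (∀ E F, E ≠ ⊥ → F ≠ ⊥ → Rm * E ≤ E → Rm * F ≤ F → E ≤ F → s E ≤ s F) ∧
  (∀ E, E ≠ ⊥ → Rm * E ≤ E → E ≤ s E) ∧
  (∀ E, E ≠ ⊥ → Rm * E ≤ E → s (s E) = s E)

/-- `s` is of finite type. -/
def IsFiniteType (Rm : Submodule D K) (s : Submodule D K → Submodule D K) : Prop :=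
  ∀ E, E ≠ ⊥ → Rm * E ≤ E → s E = sSup {G | ∃ F, IsRFG Rm F ∧ F ≤ E ∧ G = s F}

/-- `s` is a.b. -/
def IsAB (Rm : Submodule D K) (s : Submodule D K → Submodule D K) : Prop :=
  ∀ F G H : Submodule D K, IsRFG Rm F → G ≠ ⊥ → Rm * G ≤ G → H ≠ ⊥ → Rm * H ≤ H →
    s (F * G) ≤ s (F * H) → s G ≤ s H

/-- `s` is e.a.b. -/
def IsEAB (Rm : Submodule D K) (s : Submodule D K → Submodule D K) : Prop :=
  ∀ F G H : Submodule D K, IsRFG Rm F → IsRFG Rm G → IsRFG Rm H →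
    s (F * G) ≤ s (F * H) → s G ≤ s H

/-- `s` is stable. -/
def IsStable (Rm : Submodule D K) (s : Submodule D K → Submodule D K) : Prop :=
  ∀ E F, E ≠ ⊥ → F ≠ ⊥ → Rm * E ≤ E → Rm * F ≤ F → s (E ⊓ F) = s E ⊓ s F

/-- The divisorial closure `E ↦ (R : (R : E))` over the subring corresponding to `Rm`. -/
def vOp (Rm E : Submodule D K) : Submodule D K := Rm / (Rm / E)

/-- The `t`-operation over the subring corresponding to `Rm`. -/
def tOp (Rm E : Submodule D K) : Submodule D K :=
  sSup {G | ∃ F, IsRFG Rm F ∧ F ≤ E ∧ G = vOp Rm F}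

end Preamble

section Aux

variable {D : Type*} [CommRing D] [IsDomain D]
variable {K : Type*} [Field K] [Algebra D K] [IsFractionRing D K]

lemma mem_locAtM' {Q : Ideal D} (hQ : Q.IsPrime) {x : K} :
    x ∈ locAtM D K Q hQ ↔ ∃ s ∉ Q, ∃ a, x * algebraMap D K s = algebraMap D K a := by
  rw [locAtM, Subalgebra.mem_toSubmodule, locAt, Localization.subalgebra,
    Subalgebra.copy_eq, Localization.mem_range_mapToFractionRing_iff]
  constructor
  · rintro ⟨a, s, hs, rfl⟩
    exact ⟨s, hs, a, IsLocalization.eq_mk'_iff_mul_eq.mp rfl⟩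
  · rintro ⟨s, hs, a, hx⟩
    exact ⟨a, s, hs, IsLocalization.eq_mk'_iff_mul_eq.mpr hx⟩

omit [IsDomain D] [IsFractionRing D K] in
lemma one_mul_mem_one {u : K} (hu : u ∈ (1 : Submodule D K)) (c : D) :
    u * algebraMap D K c ∈ (1 : Submodule D K) := by
  rw [Submodule.one_eq_range] at hu ⊢
  obtain ⟨b, rfl⟩ := hu
  exact ⟨b * c, by simp [Algebra.linearMap_apply]⟩

end Aux


variable {D : Type*} [CommRing D] [IsDomain D]
variable {K : Type*} [Field K] [Algebra D K] [IsFractionRing D K]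

/-- if `P ⊆ Q` are primes and `P D_Q` is a `t_{D_Q}`-ideal of `D_Q`, then `P`
is a `t_D`-ideal of `D`. -/
theorem stmt12 (P Q : Ideal D) (hP : P.IsPrime) (hQ : Q.IsPrime) (hPQ : P ≤ Q)
    (h : tOp (locAtM D K Q hQ) (Submodule.map (Algebra.linearMap D K) P * locAtM D K Q hQ) =
      Submodule.map (Algebra.linearMap D K) P * locAtM D K Q hQ) :
    tOp 1 (Submodule.map (Algebra.linearMap D K) P) = Submodule.map (Algebra.linearMap D K) P := by
  set P' : Submodule D K := Submodule.map (Algebra.linearMap D K) P with hP'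
  set DQ : Submodule D K := locAtM D K Q hQ with hDQ
  have hP1 : P' ≤ (1 : Submodule D K) := by
    rintro _ ⟨p, _, rfl⟩
    rw [Submodule.one_eq_range]
    exact ⟨p, rfl⟩
  have honeDQ : (1 : K) ∈ DQ := by
    rw [hDQ, mem_locAtM' hQ]
    exact ⟨1, fun h1 => hQ.ne_top ((Ideal.eq_top_iff_one Q).mpr h1), 1, by simp⟩
  refine le_antisymm (sSup_le ?_) ?_
  · rintro G ⟨F, ⟨F₀, hFG, hF0, rfl⟩, hFP, rfl⟩
    rw [mul_one] at hFP ⊢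
    intro x hx
    rw [vOp, Submodule.mem_div_iff_forall_mul_mem] at hx
    -- x is in D
    have hx1 : x ∈ (1 : Submodule D K) := by
      have h1 : (1 : K) ∈ (1 : Submodule D K) / F₀ := by
        rw [Submodule.mem_div_iff_forall_mul_mem]
        intro z hz
        rw [one_mul]
        exact hP1 (hFP hz)
      simpa using hx 1 h1
    -- the key step : x ∈ vOp DQ (F₀ * DQ)
    have claim : ∀ y : K, (∀ z ∈ F₀ * DQ, y * z ∈ DQ) → x * y ∈ DQ := by
      intro y hy
      have key : (∀ z ∈ F₀, y * z ∈ DQ) →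
          ∃ s ∉ Q, ∀ z ∈ F₀, y * z * algebraMap D K s ∈ (1 : Submodule D K) := by
        refine Submodule.fg_induction (R := D) (M := K)
          (motive := fun N _ => (∀ z ∈ N, y * z ∈ DQ) →
            ∃ s ∉ Q, ∀ z ∈ N, y * z * algebraMap D K s ∈ (1 : Submodule D K)) ?_ ?_ F₀ hFG
        · intro w hw
          have hw' := hw w (Submodule.mem_span_singleton_self w)
          rw [hDQ, mem_locAtM' hQ] at hw'
          obtain ⟨s, hs, a, ha⟩ := hw'
          refine ⟨s, hs, fun z hz => ?_⟩
          rw [Submodule.mem_span_singleton] at hz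
          obtain ⟨d, rfl⟩ := hz
          rw [mul_smul_comm, smul_mul_assoc]
          exact Submodule.smul_mem _ d (ha ▸ Submodule.algebraMap_mem a)
        · intro N₁ N₂ _ _ ih₁ ih₂ hN
          obtain ⟨s₁, hs₁, hall₁⟩ := ih₁ fun z hz => hN z (Submodule.mem_sup_left hz)
          obtain ⟨s₂, hs₂, hall₂⟩ := ih₂ fun z hz => hN z (Submodule.mem_sup_right hz)
          refine ⟨s₁ * s₂, fun hm => ((hQ.mem_or_mem hm).elim hs₁ hs₂), fun z hz => ?_⟩
          rw [Submodule.mem_sup] at hz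
          obtain ⟨z₁, h₁, z₂, h₂, rfl⟩ := hz
          have e : y * (z₁ + z₂) * algebraMap D K (s₁ * s₂) =
              (y * z₁ * algebraMap D K s₁) * algebraMap D K s₂ +
              (y * z₂ * algebraMap D K s₂) * algebraMap D K s₁ := by
            rw [map_mul]; ring
          rw [e]
          exact Submodule.add_mem _ (one_mul_mem_one (hall₁ z₁ h₁) s₂)
            (one_mul_mem_one (hall₂ z₂ h₂) s₁)
      obtain ⟨s, hs, hall⟩ := key fun z hz => by
        have : z * 1 ∈ F₀ * DQ := Submodule.mul_mem_mul hz honeDQ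
        rw [mul_one] at this
        exact hy z this
      have hsy : algebraMap D K s * y ∈ (1 : Submodule D K) / F₀ := by
        rw [Submodule.mem_div_iff_forall_mul_mem]
        intro z hz
        have e : algebraMap D K s * y * z = y * z * algebraMap D K s := by ring
        rw [e]
        exact hall z hz
      have hxsy := hx _ hsy
      rw [Submodule.one_eq_range] at hxsy
      obtain ⟨a, ha⟩ := hxsy
      rw [hDQ, mem_locAtM' hQ]
      refine ⟨s, hs, a, ?_⟩
      have e2 : x * y * algebraMap D K s = x * (algebraMap D K s * y) := by ring
      rw [e2]
      exact ha.symm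
    have hxv : x ∈ vOp DQ (F₀ * DQ) := by
      rw [vOp, Submodule.mem_div_iff_forall_mul_mem]
      intro y hy
      rw [Submodule.mem_div_iff_forall_mul_mem] at hy
      exact claim y hy
    have hxPDQ : x ∈ P' * DQ := by
      rw [← h, tOp]
      have hmem : vOp DQ (F₀ * DQ) ∈
          {G | ∃ F, IsRFG DQ F ∧ F ≤ P' * DQ ∧ G = vOp DQ F} :=
        ⟨F₀ * DQ, ⟨F₀, hFG, hF0, rfl⟩, mul_le_mul' hFP le_rfl, rfl⟩
      exact le_sSup hmem hxv
    -- contraction: elements of P' * DQ that lie in D lie in P'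
    have hD : ∀ w ∈ P' * DQ, ∃ s ∉ Q, ∃ p ∈ P, w * algebraMap D K s = algebraMap D K p := by
      intro w hw
      refine Submodule.mul_induction_on hw ?_ ?_
      · rintro _ ⟨p, hp, rfl⟩ n hn
        rw [hDQ, mem_locAtM' hQ] at hn
        obtain ⟨s, hs, a, ha⟩ := hn
        refine ⟨s, hs, p * a, Ideal.mul_mem_right a P hp, ?_⟩
        rw [Algebra.linearMap_apply, map_mul, mul_assoc, ha]
      · rintro w₁ w₂ ⟨s₁, hs₁, p₁, hp₁, e₁⟩ ⟨s₂, hs₂, p₂, hp₂, e₂⟩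
        refine ⟨s₁ * s₂, fun hm => ((hQ.mem_or_mem hm).elim hs₁ hs₂),
          p₁ * s₂ + p₂ * s₁,
          Ideal.add_mem P (Ideal.mul_mem_right s₂ P hp₁) (Ideal.mul_mem_right s₁ P hp₂), ?_⟩
        rw [map_mul, map_add, map_mul, map_mul]
        linear_combination algebraMap D K s₂ * e₁ + algebraMap D K s₁ * e₂
    obtain ⟨s, hs, p, hp, he⟩ := hD x hxPDQ
    rw [Submodule.one_eq_range] at hx1
    obtain ⟨d, hd⟩ := hx1
    have hds : d * s = p := by
      apply IsFractionRing.injective D K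
      rw [map_mul, ← he, ← hd, Algebra.linearMap_apply]
    have hdP : d ∈ P := (hP.mem_or_mem (hds ▸ hp)).resolve_right
      (fun hsP => hs (hPQ hsP))
    exact ⟨d, hdP, hd⟩
  · intro x hx
    by_cases hx0 : x = 0
    · subst hx0
      exact Submodule.zero_mem _
    · have hspan : Submodule.span D {x} ≠ ⊥ := by
        simp [Submodule.span_singleton_eq_bot, hx0]
      rw [tOp]
      have hmem : vOp 1 (Submodule.span D {x}) ∈
          {G | ∃ F, IsRFG (1 : Submodule D K) F ∧ F ≤ P' ∧ G = vOp 1 F} :=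
        ⟨Submodule.span D {x},
          ⟨Submodule.span D {x}, Submodule.fg_span_singleton x, hspan, (mul_one _).symm⟩,
          Submodule.span_le.mpr (Set.singleton_subset_iff.mpr hx), rfl⟩
      refine le_sSup hmem ?_
      rw [vOp, Submodule.mem_div_iff_forall_mul_mem]
      intro y hy
      rw [Submodule.mem_div_iff_forall_mul_mem] at hy
      have := hy x (Submodule.mem_span_singleton_self x)
      rwa [mul_comm]
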